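/- Define the binary convolution u*v = u(1−v) + v(1−u) for u, v ∈ [0,1], and G(u) = h_b(p*u) − h_b(u) where h_b is the binary entropy function and 0 < p < 1/2. Then for any 0 ≤ D_1 ≤ D_2 ≤ 1/2, it holds that 1 − h_b(D_2 * p) + h_b(p * D_1) − h_b(D_1) ≥ 1 − h_b(D_2); that is, G(D_1) ≥ h_b(p*D_2) − h_b(D_2) = G(D_2) whenever D_1 ≤ D_2 ≤ 1/2. -/
import Mathlib


/-- Binary entropy function. -/
noncomputable def binEnt (u : ℝ) : ℝ := -u * Real.log u - (1 - u) * Real.log (1 - u)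

/-- Binary convolution. -/
def binConv (u v : ℝ) : ℝ := u * (1 - v) + v * (1 - u)

lemma binEnt_eq (u : ℝ) : binEnt u = Real.binEntropy u := by
  simp [binEnt, Real.binEntropy, Real.log_inv]; ring

lemma G_hasDerivAt (p : ℝ) (hp0 : 0 < p) (hp : p < 1 / 2) (x : ℝ)
    (hx : x ∈ Set.Ioo (0:ℝ) (1/2)) :
    HasDerivAt (fun u => Real.binEntropy (p + (1 - 2*p) * u) - Real.binEntropy u)
      ((Real.log (1 - (p + (1 - 2*p) * x)) - Real.log (p + (1 - 2*p) * x)) * (1 - 2*p)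
        - (Real.log (1 - x) - Real.log x)) x := by
  obtain ⟨hx0, hx1⟩ := hx
  set w := p + (1 - 2*p) * x with hw
  have hw0 : (0:ℝ) < w := by nlinarith
  have hw1 : w < 1/2 := by nlinarith
  have h1 : HasDerivAt (fun u : ℝ => p + (1 - 2*p) * u) (1 - 2*p) x := by
    simpa using ((hasDerivAt_id x).const_mul (1 - 2*p)).const_add p
  have h2 := (Real.hasDerivAt_binEntropy (p := w) hw0.ne' (by linarith)).comp x h1
  have h3 := Real.hasDerivAt_binEntropy (p := x) hx0.ne' (by linarith)
  exact h2.sub h3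

lemma F_antitone (p : ℝ) (hp0 : 0 < p) (hp : p < 1 / 2) :
    AntitoneOn (fun u => Real.binEntropy (p + (1 - 2*p) * u) - Real.binEntropy u)
      (Set.Icc (0:ℝ) (1/2)) := by
  have hint : interior (Set.Icc (0:ℝ) (1/2)) = Set.Ioo (0:ℝ) (1/2) := interior_Icc
  apply antitoneOn_of_deriv_nonpos (convex_Icc _ _)
  · exact ((Real.binEntropy_continuous.comp (by continuity)).sub
      Real.binEntropy_continuous).continuousOn
  · intro x hx
    rw [hint] at hx
    exact (G_hasDerivAt p hp0 hp x hx).differentiableAt.differentiableWithinAt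
  · intro x hx
    rw [hint] at hx
    rw [(G_hasDerivAt p hp0 hp x hx).deriv]
    obtain ⟨hx0, hx1⟩ := hx
    set w := p + (1 - 2*p) * x with hwdef
    have hw0 : (0:ℝ) < w := by nlinarith
    have hw1 : w < 1/2 := by nlinarith
    have hxw : x ≤ w := by nlinarith
    have hA : 0 ≤ Real.log (1 - w) - Real.log w :=
      sub_nonneg.2 (Real.log_le_log hw0 (by linarith))
    have hB1 : Real.log (1 - w) ≤ Real.log (1 - x) :=
      Real.log_le_log (by linarith) (by linarith)
    have hB2 : Real.log x ≤ Real.log w := Real.log_le_log hx0 hxw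
    nlinarith [hA, hB1, hB2]

/-- For 0 < p < 1/2 and 0 ≤ D₁ ≤ D₂ ≤ 1/2,
1 − h_b(D₂*p) + h_b(p*D₁) − h_b(D₁) ≥ 1 − h_b(D₂);
equivalently G(u) = h_b(p*u) − h_b(u) is non-increasing on [0,1/2]. -/
theorem G_antitone (p : ℝ) (hp0 : 0 < p) (hp : p < 1 / 2)
    (D₁ D₂ : ℝ) (h0 : 0 ≤ D₁) (h12 : D₁ ≤ D₂) (h2 : D₂ ≤ 1 / 2) :
    1 - binEnt (binConv D₂ p) + binEnt (binConv p D₁) - binEnt D₁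
      ≥ 1 - binEnt D₂ := by
  have key := F_antitone p hp0 hp (Set.mem_Icc.2 ⟨h0, le_trans h12 h2⟩)
    (Set.mem_Icc.2 ⟨le_trans h0 h12, h2⟩) h12
  simp only at key
  have e1 : binConv D₂ p = p + (1 - 2*p) * D₂ := by unfold binConv; ring
  have e2 : binConv p D₁ = p + (1 - 2*p) * D₁ := by unfold binConv; ring
  rw [e1, e2, binEnt_eq, binEnt_eq, binEnt_eq, binEnt_eq]
  linarith
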